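/- Let T be a linear bunched term in variables x₁,…,xₙ (each variable occurring at most once), interpreted in the BI algebra C of closed sets of bunches by replacing ',' with * and ';' with ∧. Then for all closed sets X₁,…,Xₙ: [[T]](X₁,…,Xₙ) = cl({T[Δ₁,…,Δₙ] | Δᵢ ∈ Xᵢ for all i}), where T[Δ⃗] substitutes bunches for variables. -/

import Mathlib

/-- Formulas of BI. -/
inductive Frml : Type
  | atom : Nat → Frml
  | top : Frml
  | bot : Frml
  | emp : Frml
  | and : Frml → Frml → Frml
  | or : Frml → Frml → Frml
  | imp : Frml → Frml → Frml
  | sep : Frml → Frml → Frml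
  | wand : Frml → Frml → Frml

/-- Bunches: trees with formula leaves, multiplicative/additive units and nodes. -/
inductive Bunch : Type
  | frml : Frml → Bunch
  | mempty : Bunch    -- ∅ₘ
  | aempty : Bunch    -- ∅ₐ
  | comma : Bunch → Bunch → Bunch   -- multiplicative ','
  | semic : Bunch → Bunch → Bunch   -- additive ';'

/-- Bunched contexts: bunches with a single hole. -/
inductive BCtx : Type
  | hole : BCtx
  | commaL : BCtx → Bunch → BCtx
  | commaR : Bunch → BCtx → BCtx
  | semicL : BCtx → Bunch → BCtx
  | semicR : Bunch → BCtx → BCtx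

/-- Filling the hole of a bunched context with a bunch. -/
def BCtx.fill : BCtx → Bunch → Bunch
  | .hole, Δ => Δ
  | .commaL C Γ, Δ => .comma (C.fill Δ) Γ
  | .commaR Γ C, Δ => .comma Γ (C.fill Δ)
  | .semicL C Γ, Δ => .semic (C.fill Δ) Γ
  | .semicR Γ C, Δ => .semic Γ (C.fill Δ)

/-- Equivalence of bunches: commutative-monoid laws for (',', ∅ₘ) and (';', ∅ₐ),
under arbitrary bunched contexts. -/
inductive BEquiv : Bunch → Bunch → Prop
  | refl (Δ : Bunch) : BEquiv Δ Δ
  | symm {Δ Δ' : Bunch} : BEquiv Δ Δ' → BEquiv Δ' Δ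
  | trans {Δ₁ Δ₂ Δ₃ : Bunch} : BEquiv Δ₁ Δ₂ → BEquiv Δ₂ Δ₃ → BEquiv Δ₁ Δ₃
  | commaComm (Δ₁ Δ₂ : Bunch) : BEquiv (.comma Δ₁ Δ₂) (.comma Δ₂ Δ₁)
  | semicComm (Δ₁ Δ₂ : Bunch) : BEquiv (.semic Δ₁ Δ₂) (.semic Δ₂ Δ₁)
  | commaAssoc (Δ₁ Δ₂ Δ₃ : Bunch) :
      BEquiv (.comma Δ₁ (.comma Δ₂ Δ₃)) (.comma (.comma Δ₁ Δ₂) Δ₃)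
  | semicAssoc (Δ₁ Δ₂ Δ₃ : Bunch) :
      BEquiv (.semic Δ₁ (.semic Δ₂ Δ₃)) (.semic (.semic Δ₁ Δ₂) Δ₃)
  | commaUnit (Δ : Bunch) : BEquiv (.comma Δ .mempty) Δ
  | semicUnit (Δ : Bunch) : BEquiv (.semic Δ .aempty) Δ
  | ctx (C : BCtx) {Δ Δ' : Bunch} : BEquiv Δ Δ' → BEquiv (C.fill Δ) (C.fill Δ')

/-- Cut-free sequent calculus for BI, with the axiom rule restricted to atoms. -/
inductive Proves : Bunch → Frml → Prop
  | ax (a : Nat) : Proves (.frml (.atom a)) (.atom a)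
  | equiv {Δ Δ' : Bunch} {φ : Frml} :
      Proves Δ' φ → BEquiv Δ Δ' → Proves Δ φ
  | weaken (C : BCtx) {Δ₁ Δ₂ : Bunch} {φ : Frml} :
      Proves (C.fill Δ₁) φ → Proves (C.fill (.semic Δ₁ Δ₂)) φ
  | contract (C : BCtx) {Δ₁ : Bunch} {φ : Frml} :
      Proves (C.fill (.semic Δ₁ Δ₁)) φ → Proves (C.fill Δ₁) φ
  | empR : Proves .mempty .emp
  | empL (C : BCtx) {φ : Frml} :
      Proves (C.fill .mempty) φ → Proves (C.fill (.frml .emp)) φ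
  | sepR {Δ₁ Δ₂ : Bunch} {φ ψ : Frml} :
      Proves Δ₁ φ → Proves Δ₂ ψ → Proves (.comma Δ₁ Δ₂) (.sep φ ψ)
  | sepL (C : BCtx) {φ ψ χ : Frml} :
      Proves (C.fill (.comma (.frml φ) (.frml ψ))) χ →
      Proves (C.fill (.frml (.sep φ ψ))) χ
  | wandR {Δ : Bunch} {φ ψ : Frml} :
      Proves (.comma Δ (.frml φ)) ψ → Proves Δ (.wand φ ψ)
  | wandL (C : BCtx) {Δ₁ Δ₂ : Bunch} {φ ψ χ : Frml} :
      Proves Δ₁ φ → Proves (C.fill (.comma Δ₂ (.frml ψ))) χ →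
      Proves (C.fill (.comma (.comma Δ₁ Δ₂) (.frml (.wand φ ψ)))) χ
  | topR : Proves .aempty .top
  | topL (C : BCtx) {φ : Frml} :
      Proves (C.fill .aempty) φ → Proves (C.fill (.frml .top)) φ
  | andR {Δ₁ Δ₂ : Bunch} {φ ψ : Frml} :
      Proves Δ₁ φ → Proves Δ₂ ψ → Proves (.semic Δ₁ Δ₂) (.and φ ψ)
  | andL (C : BCtx) {φ ψ χ : Frml} :
      Proves (C.fill (.semic (.frml φ) (.frml ψ))) χ →
      Proves (C.fill (.frml (.and φ ψ))) χ
  | impR {Δ : Bunch} {φ ψ : Frml} :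
      Proves (.semic Δ (.frml φ)) ψ → Proves Δ (.imp φ ψ)
  | impL (C : BCtx) {Δ₁ Δ₂ : Bunch} {φ ψ χ : Frml} :
      Proves Δ₁ φ → Proves (C.fill (.semic Δ₂ (.frml ψ))) χ →
      Proves (C.fill (.semic (.semic Δ₁ Δ₂) (.frml (.imp φ ψ)))) χ
  | botL (C : BCtx) {φ : Frml} : Proves (C.fill (.frml .bot)) φ
  | orR1 {Δ : Bunch} {φ ψ : Frml} : Proves Δ φ → Proves Δ (.or φ ψ)
  | orR2 {Δ : Bunch} {φ ψ : Frml} : Proves Δ ψ → Proves Δ (.or φ ψ)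
  | orL (C : BCtx) {φ ψ χ : Frml} :
      Proves (C.fill (.frml φ)) χ → Proves (C.fill (.frml ψ)) χ →
      Proves (C.fill (.frml (.or φ ψ))) χ

/-- The formula collapse `⟨Δ⟩` of a bunch. -/
def Bunch.collapse : Bunch → Frml
  | .frml φ => φ
  | .mempty => .emp
  | .aempty => .top
  | .comma Δ₁ Δ₂ => .sep Δ₁.collapse Δ₂.collapse
  | .semic Δ₁ Δ₂ => .and Δ₁.collapse Δ₂.collapse

/-- The principal closed set `⟦φ⟧ = {Δ | Δ ⊢cf φ}`. -/
def pr (φ : Frml) : Set Bunch := {Δ | Proves Δ φ}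

/-- The Moore closure generated by the principal sets:
`cl X = ⋂ {⟦φ⟧ | X ⊆ ⟦φ⟧}`. -/
def clB (X : Set Bunch) : Set Bunch := ⋂₀ {Y | ∃ φ : Frml, Y = pr φ ∧ X ⊆ Y}

/-- A set of bunches is closed if it is a fixpoint of the closure operator. -/
def ClosedB (X : Set Bunch) : Prop := clB X = X

/-- Bunched terms: trees built from `','`, `';'` and variables. -/
inductive BTerm : Type
  | var : Nat → BTerm
  | comma : BTerm → BTerm → BTerm
  | semic : BTerm → BTerm → BTerm

/-- Substituting bunches for the variables of a bunched term. -/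
def BTerm.subst : BTerm → (Nat → Bunch) → Bunch
  | .var i, Δ => Δ i
  | .comma t u, Δ => Bunch.comma (t.subst Δ) (u.subst Δ)
  | .semic t u, Δ => Bunch.semic (t.subst Δ) (u.subst Δ)

/-- Number of occurrences of a variable in a bunched term. -/
def BTerm.occ : BTerm → Nat → Nat
  | .var j, i => if j = i then 1 else 0
  | .comma t u, i => t.occ i + u.occ i
  | .semic t u, i => t.occ i + u.occ i

/-- A bunched term is linear if every variable occurs at most once. -/
def BTerm.Linear (t : BTerm) : Prop := ∀ i, t.occ i ≤ 1

/-- Interpretation of a bunched term in the BI algebra `C` of closed sets of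
bunches, replacing `','` by `*` and `';'` by `∧`. -/
def BTerm.interpC : BTerm → (Nat → Set Bunch) → Set Bunch
  | .var i, X => X i
  | .comma t u, X =>
      clB {b | ∃ Δ ∈ t.interpC X, ∃ Δ' ∈ u.interpC X, b = Bunch.comma Δ Δ'}
  | .semic t u, X =>
      clB {b | ∃ Δ ∈ t.interpC X, ∃ Δ' ∈ u.interpC X, b = Bunch.semic Δ Δ'}


/-! ### Auxiliary machinery -/

namespace BCtx
def comp : BCtx → BCtx → BCtx
  | .hole, D => D
  | .commaL C Γ, D => .commaL (C.comp D) Γ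
  | .commaR Γ C, D => .commaR Γ (C.comp D)
  | .semicL C Γ, D => .semicL (C.comp D) Γ
  | .semicR Γ C, D => .semicR Γ (C.comp D)

theorem fill_comp (C D : BCtx) (b : Bunch) :
    (C.comp D).fill b = C.fill (D.fill b) := by
  induction C <;> simp [comp, fill, *]
end BCtx

/-- Multi-holed bunches. -/
inductive BunchH : Type
  | hole : BunchH
  | frml : Frml → BunchH
  | mempty : BunchH
  | aempty : BunchH
  | comma : BunchH → BunchH → BunchH
  | semic : BunchH → BunchH → BunchH

/-- Fill all holes with the same bunch. -/
def BunchH.fillH : BunchH → Bunch → Bunch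
  | .hole, b => b
  | .frml φ, _ => .frml φ
  | .mempty, _ => .mempty
  | .aempty, _ => .aempty
  | .comma H₁ H₂, b => .comma (H₁.fillH b) (H₂.fillH b)
  | .semic H₁ H₂, b => .semic (H₁.fillH b) (H₂.fillH b)

def Bunch.toH : Bunch → BunchH
  | .frml φ => .frml φ
  | .mempty => .mempty
  | .aempty => .aempty
  | .comma a b => .comma a.toH b.toH
  | .semic a b => .semic a.toH b.toH

@[simp] theorem Bunch.fillH_toH (Δ : Bunch) (b : Bunch) : Δ.toH.fillH b = Δ := by
  induction Δ <;> simp [toH, BunchH.fillH, *]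

def BCtx.toHc : BCtx → BunchH
  | .hole => .hole
  | .commaL C Γ => .comma C.toHc Γ.toH
  | .commaR Γ C => .comma Γ.toH C.toHc
  | .semicL C Γ => .semic C.toHc Γ.toH
  | .semicR Γ C => .semic Γ.toH C.toHc

@[simp] theorem BCtx.fillH_toHc (C : BCtx) (b : Bunch) : C.toHc.fillH b = C.fill b := by
  induction C <;> simp [toHc, BunchH.fillH, BCtx.fill, *]

/-- Decomposition of a multi-holed bunch along a one-holed context. -/
theorem fill_decomp (χ : Frml) :
    ∀ (C₀ : BCtx) (H : BunchH) (Δ : Bunch), H.fillH (.frml χ) = C₀.fill Δ →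
    ∃ (HΔ : BunchH) (G : BunchH → BunchH),
      H = G HΔ ∧ Δ = HΔ.fillH (.frml χ) ∧
      (∀ K, (G K).fillH (.frml χ) = C₀.fill (K.fillH (.frml χ))) ∧
      (∀ b, ∃ C' : BCtx, ∀ K, (G K).fillH b = C'.fill (K.fillH b)) := by
  intro C₀
  induction C₀ with
  | hole =>
    intro H Δ h
    exact ⟨H, id, rfl, h.symm, fun K => rfl, fun b => ⟨.hole, fun K => rfl⟩⟩
  | commaL C₁ Γ ih =>
    intro H Δ h
    cases H with
    | comma Ha Hb =>
      simp only [BunchH.fillH, BCtx.fill, Bunch.comma.injEq] at h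
      obtain ⟨h1, h2⟩ := h
      obtain ⟨HΔ, G₁, hG, hΔ, p3, p4⟩ := ih Ha Δ h1
      refine ⟨HΔ, fun K => .comma (G₁ K) Hb, by rw [hG], hΔ, ?_, ?_⟩
      · intro K; simp [BunchH.fillH, p3, BCtx.fill, h2]
      · intro b
        obtain ⟨C', hC'⟩ := p4 b
        exact ⟨.commaL C' (Hb.fillH b), fun K => by simp [BunchH.fillH, hC', BCtx.fill]⟩
    | hole => simp [BunchH.fillH, BCtx.fill] at h
    | frml ψ => simp [BunchH.fillH, BCtx.fill] at h
    | mempty => simp [BunchH.fillH, BCtx.fill] at h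
    | aempty => simp [BunchH.fillH, BCtx.fill] at h
    | semic Ha Hb => simp [BunchH.fillH, BCtx.fill] at h
  | commaR Γ C₁ ih =>
    intro H Δ h
    cases H with
    | comma Ha Hb =>
      simp only [BunchH.fillH, BCtx.fill, Bunch.comma.injEq] at h
      obtain ⟨h1, h2⟩ := h
      obtain ⟨HΔ, G₁, hG, hΔ, p3, p4⟩ := ih Hb Δ h2
      refine ⟨HΔ, fun K => .comma Ha (G₁ K), by rw [hG], hΔ, ?_, ?_⟩
      · intro K; simp [BunchH.fillH, p3, BCtx.fill, h1]
      · intro b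
        obtain ⟨C', hC'⟩ := p4 b
        exact ⟨.commaR (Ha.fillH b) C', fun K => by simp [BunchH.fillH, hC', BCtx.fill]⟩
    | hole => simp [BunchH.fillH, BCtx.fill] at h
    | frml ψ => simp [BunchH.fillH, BCtx.fill] at h
    | mempty => simp [BunchH.fillH, BCtx.fill] at h
    | aempty => simp [BunchH.fillH, BCtx.fill] at h
    | semic Ha Hb => simp [BunchH.fillH, BCtx.fill] at h
  | semicL C₁ Γ ih =>
    intro H Δ h
    cases H with
    | semic Ha Hb =>
      simp only [BunchH.fillH, BCtx.fill, Bunch.semic.injEq] at h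
      obtain ⟨h1, h2⟩ := h
      obtain ⟨HΔ, G₁, hG, hΔ, p3, p4⟩ := ih Ha Δ h1
      refine ⟨HΔ, fun K => .semic (G₁ K) Hb, by rw [hG], hΔ, ?_, ?_⟩
      · intro K; simp [BunchH.fillH, p3, BCtx.fill, h2]
      · intro b
        obtain ⟨C', hC'⟩ := p4 b
        exact ⟨.semicL C' (Hb.fillH b), fun K => by simp [BunchH.fillH, hC', BCtx.fill]⟩
    | hole => simp [BunchH.fillH, BCtx.fill] at h
    | frml ψ => simp [BunchH.fillH, BCtx.fill] at h
    | mempty => simp [BunchH.fillH, BCtx.fill] at h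
    | aempty => simp [BunchH.fillH, BCtx.fill] at h
    | comma Ha Hb => simp [BunchH.fillH, BCtx.fill] at h
  | semicR Γ C₁ ih =>
    intro H Δ h
    cases H with
    | semic Ha Hb =>
      simp only [BunchH.fillH, BCtx.fill, Bunch.semic.injEq] at h
      obtain ⟨h1, h2⟩ := h
      obtain ⟨HΔ, G₁, hG, hΔ, p3, p4⟩ := ih Hb Δ h2
      refine ⟨HΔ, fun K => .semic Ha (G₁ K), by rw [hG], hΔ, ?_, ?_⟩
      · intro K; simp [BunchH.fillH, p3, BCtx.fill, h1]
      · intro b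
        obtain ⟨C', hC'⟩ := p4 b
        exact ⟨.semicR (Ha.fillH b) C', fun K => by simp [BunchH.fillH, hC', BCtx.fill]⟩
    | hole => simp [BunchH.fillH, BCtx.fill] at h
    | frml ψ => simp [BunchH.fillH, BCtx.fill] at h
    | mempty => simp [BunchH.fillH, BCtx.fill] at h
    | aempty => simp [BunchH.fillH, BCtx.fill] at h
    | comma Ha Hb => simp [BunchH.fillH, BCtx.fill] at h


theorem fillH_eq_comma {H : BunchH} {χ : Frml} {A B : Bunch}
    (h : H.fillH (.frml χ) = .comma A B) :
    ∃ H₁ H₂, H = .comma H₁ H₂ ∧ H₁.fillH (.frml χ) = A ∧ H₂.fillH (.frml χ) = B := by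
  cases H <;> simp_all [BunchH.fillH]

theorem fillH_eq_semic {H : BunchH} {χ : Frml} {A B : Bunch}
    (h : H.fillH (.frml χ) = .semic A B) :
    ∃ H₁ H₂, H = .semic H₁ H₂ ∧ H₁.fillH (.frml χ) = A ∧ H₂.fillH (.frml χ) = B := by
  cases H <;> simp_all [BunchH.fillH]

theorem fillH_eq_mempty {H : BunchH} {χ : Frml}
    (h : H.fillH (.frml χ) = .mempty) : H = .mempty := by
  cases H <;> simp_all [BunchH.fillH]

theorem fillH_eq_aempty {H : BunchH} {χ : Frml}
    (h : H.fillH (.frml χ) = .aempty) : H = .aempty := by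
  cases H <;> simp_all [BunchH.fillH]

theorem fillH_eq_frml {H : BunchH} {χ ψ : Frml}
    (h : H.fillH (.frml χ) = .frml ψ) : (H = .hole ∧ χ = ψ) ∨ H = .frml ψ := by
  cases H <;> simp_all [BunchH.fillH]

/-- Transport of occurrences along bunch equivalence (both directions). -/
theorem bequiv_transport {Γ₁ Γ₂ : Bunch} (h : BEquiv Γ₁ Γ₂) (χ : Frml) :
    (∀ H : BunchH, Γ₁ = H.fillH (.frml χ) →
      ∃ H' : BunchH, Γ₂ = H'.fillH (.frml χ) ∧ ∀ b, BEquiv (H.fillH b) (H'.fillH b)) ∧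
    (∀ H : BunchH, Γ₂ = H.fillH (.frml χ) →
      ∃ H' : BunchH, Γ₁ = H'.fillH (.frml χ) ∧ ∀ b, BEquiv (H.fillH b) (H'.fillH b)) := by
  induction h with
  | refl Δ =>
    exact ⟨fun H hH => ⟨H, hH, fun b => .refl _⟩, fun H hH => ⟨H, hH, fun b => .refl _⟩⟩
  | symm h ih => exact ⟨ih.2, ih.1⟩
  | trans h₁ h₂ ih₁ ih₂ =>
    constructor
    · intro H hH
      obtain ⟨H', hH', he⟩ := ih₁.1 H hH
      obtain ⟨H'', hH'', he'⟩ := ih₂.1 H' hH'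
      exact ⟨H'', hH'', fun b => .trans (he b) (he' b)⟩
    · intro H hH
      obtain ⟨H', hH', he⟩ := ih₂.2 H hH
      obtain ⟨H'', hH'', he'⟩ := ih₁.2 H' hH'
      exact ⟨H'', hH'', fun b => .trans (he b) (he' b)⟩
  | commaComm Δ₁ Δ₂ =>
    constructor
    · intro H hH
      obtain ⟨H₁, H₂, rfl, h1, h2⟩ := fillH_eq_comma hH.symm
      exact ⟨.comma H₂ H₁, by simp [BunchH.fillH, h1, h2], fun b => .commaComm _ _⟩
    · intro H hH
      obtain ⟨H₂, H₁, rfl, h2, h1⟩ := fillH_eq_comma hH.symm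
      exact ⟨.comma H₁ H₂, by simp [BunchH.fillH, h1, h2], fun b => .commaComm _ _⟩
  | semicComm Δ₁ Δ₂ =>
    constructor
    · intro H hH
      obtain ⟨H₁, H₂, rfl, h1, h2⟩ := fillH_eq_semic hH.symm
      exact ⟨.semic H₂ H₁, by simp [BunchH.fillH, h1, h2], fun b => .semicComm _ _⟩
    · intro H hH
      obtain ⟨H₂, H₁, rfl, h2, h1⟩ := fillH_eq_semic hH.symm
      exact ⟨.semic H₁ H₂, by simp [BunchH.fillH, h1, h2], fun b => .semicComm _ _⟩
  | commaAssoc Δ₁ Δ₂ Δ₃ =>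
    constructor
    · intro H hH
      obtain ⟨H₁, H₂₃, rfl, h1, h23⟩ := fillH_eq_comma hH.symm
      obtain ⟨H₂, H₃, rfl, h2, h3⟩ := fillH_eq_comma h23
      exact ⟨.comma (.comma H₁ H₂) H₃, by simp [BunchH.fillH, h1, h2, h3],
        fun b => .commaAssoc _ _ _⟩
    · intro H hH
      obtain ⟨H₁₂, H₃, rfl, h12, h3⟩ := fillH_eq_comma hH.symm
      obtain ⟨H₁, H₂, rfl, h1, h2⟩ := fillH_eq_comma h12
      exact ⟨.comma H₁ (.comma H₂ H₃), by simp [BunchH.fillH, h1, h2, h3],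
        fun b => .symm (.commaAssoc _ _ _)⟩
  | semicAssoc Δ₁ Δ₂ Δ₃ =>
    constructor
    · intro H hH
      obtain ⟨H₁, H₂₃, rfl, h1, h23⟩ := fillH_eq_semic hH.symm
      obtain ⟨H₂, H₃, rfl, h2, h3⟩ := fillH_eq_semic h23
      exact ⟨.semic (.semic H₁ H₂) H₃, by simp [BunchH.fillH, h1, h2, h3],
        fun b => .semicAssoc _ _ _⟩
    · intro H hH
      obtain ⟨H₁₂, H₃, rfl, h12, h3⟩ := fillH_eq_semic hH.symm
      obtain ⟨H₁, H₂, rfl, h1, h2⟩ := fillH_eq_semic h12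
      exact ⟨.semic H₁ (.semic H₂ H₃), by simp [BunchH.fillH, h1, h2, h3],
        fun b => .symm (.semicAssoc _ _ _)⟩
  | commaUnit Δ =>
    constructor
    · intro H hH
      obtain ⟨H₁, H₂, rfl, h1, h2⟩ := fillH_eq_comma hH.symm
      have := fillH_eq_mempty h2; subst this
      exact ⟨H₁, h1.symm, fun b => .commaUnit _⟩
    · intro H hH
      exact ⟨.comma H .mempty, by simp [BunchH.fillH, ← hH], fun b =>
        .symm (.commaUnit _)⟩
  | semicUnit Δ =>
    constructor
    · intro H hH
      obtain ⟨H₁, H₂, rfl, h1, h2⟩ := fillH_eq_semic hH.symm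
      have := fillH_eq_aempty h2; subst this
      exact ⟨H₁, h1.symm, fun b => .semicUnit _⟩
    · intro H hH
      exact ⟨.semic H .aempty, by simp [BunchH.fillH, ← hH], fun b =>
        .symm (.semicUnit _)⟩
  | ctx C₀ h ih =>
    rename_i Δ Δ' 
    constructor
    · intro H hH
      obtain ⟨HΔ, G, rfl, hΔ, p3, p4⟩ := fill_decomp χ C₀ H Δ hH.symm
      obtain ⟨HΔ', hΔ', he⟩ := ih.1 HΔ hΔ
      refine ⟨G HΔ', by rw [p3, ← hΔ'], fun b => ?_⟩
      obtain ⟨C', hC'⟩ := p4 b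
      rw [hC', hC']
      exact .ctx C' (he b)
    · intro H hH
      obtain ⟨HΔ, G, rfl, hΔ, p3, p4⟩ := fill_decomp χ C₀ H Δ' hH.symm
      obtain ⟨HΔ', hΔ', he⟩ := ih.2 HΔ hΔ
      refine ⟨G HΔ', by rw [p3, ← hΔ'], fun b => ?_⟩
      obtain ⟨C', hC'⟩ := p4 b
      rw [hC', hC']
      exact .ctx C' (he b)


/-- Generic inversion of the invertible left rules. -/
theorem provesInv {ξ : Frml} {e : Bunch}
    (hχ : (ξ = .emp ∧ e = .mempty) ∨ (ξ = .top ∧ e = .aempty) ∨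
      (∃ α β, ξ = .sep α β ∧ e = .comma (.frml α) (.frml β)) ∨
      (∃ α β, ξ = .and α β ∧ e = .semic (.frml α) (.frml β)))
    {Γ : Bunch} {φ : Frml} (hp : Proves Γ φ) :
    ∀ H : BunchH, Γ = H.fillH (.frml ξ) → Proves (H.fillH e) φ := by
  induction hp with
  | ax a =>
    intro H hH
    rcases fillH_eq_frml hH.symm with ⟨rfl, hξ⟩ | rfl
    · rw [hξ] at hχ; simp at hχ
    · exact Proves.ax a
  | equiv hp' he ih =>
    intro H hH
    obtain ⟨H', hH', heq⟩ := (bequiv_transport he ξ).1 H hH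
    exact Proves.equiv (ih H' hH') (heq e)
  | weaken C hp' ih =>
    intro H hH
    obtain ⟨HΔ, G, rfl, hΔ, p3, p4⟩ := fill_decomp ξ C H _ hH.symm
    obtain ⟨H₁, H₂, rfl, e1, e2⟩ := fillH_eq_semic hΔ.symm
    obtain ⟨Ce, hCe⟩ := p4 e
    have h1 := ih (G H₁) (by rw [p3, e1])
    rw [hCe] at h1 ⊢
    simp only [BunchH.fillH] at h1 ⊢
    exact Proves.weaken Ce h1
  | contract C hp' ih =>
    intro H hH
    obtain ⟨HΔ, G, rfl, hΔ, p3, p4⟩ := fill_decomp ξ C H _ hH.symm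
    obtain ⟨Ce, hCe⟩ := p4 e
    have h1 := ih (G (.semic HΔ HΔ)) (by rw [p3]; simp [BunchH.fillH, ← hΔ])
    rw [hCe] at h1 ⊢
    simp only [BunchH.fillH] at h1 ⊢
    exact Proves.contract Ce h1
  | empR =>
    intro H hH
    rw [fillH_eq_mempty hH.symm]
    exact Proves.empR
  | empL C hp' ih =>
    intro H hH
    obtain ⟨HΔ, G, rfl, hΔ, p3, p4⟩ := fill_decomp ξ C H _ hH.symm
    obtain ⟨Ce, hCe⟩ := p4 e
    rcases fillH_eq_frml hΔ.symm with ⟨rfl, hξ⟩ | rfl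
    · have he := hχ
      rw [hξ] at he; simp at he
      have h1 := ih (G .mempty) (by rw [p3]; simp [BunchH.fillH])
      rw [hCe] at h1 ⊢
      simp only [BunchH.fillH] at h1 ⊢
      rw [he]
      exact h1
    · have h1 := ih (G .mempty) (by rw [p3]; simp [BunchH.fillH])
      rw [hCe] at h1 ⊢
      simp only [BunchH.fillH] at h1 ⊢
      exact Proves.empL Ce h1
  | sepR hp1 hp2 ih1 ih2 =>
    intro H hH
    obtain ⟨H₁, H₂, rfl, e1, e2⟩ := fillH_eq_comma hH.symm
    exact Proves.sepR (ih1 H₁ e1.symm) (ih2 H₂ e2.symm)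
  | sepL C hp' ih =>
    rename_i α β γ
    intro H hH
    obtain ⟨HΔ, G, rfl, hΔ, p3, p4⟩ := fill_decomp ξ C H _ hH.symm
    obtain ⟨Ce, hCe⟩ := p4 e
    have h1 := ih (G (.comma (.frml α) (.frml β))) (by rw [p3]; simp [BunchH.fillH])
    rcases fillH_eq_frml hΔ.symm with ⟨rfl, hξ⟩ | rfl
    · have he := hχ
      rw [hξ] at he; simp at he
      obtain ⟨α', β', ⟨rfl, rfl⟩, rfl⟩ := he
      rw [hCe] at h1 ⊢
      simp only [BunchH.fillH] at h1 ⊢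
      exact h1
    · rw [hCe] at h1 ⊢
      simp only [BunchH.fillH] at h1 ⊢
      exact Proves.sepL Ce h1
  | wandR hp' ih =>
    rename_i Δ α β
    intro H hH
    have h1 := ih (.comma H (.frml α)) (by simp [BunchH.fillH, ← hH])
    exact Proves.wandR (by simpa [BunchH.fillH] using h1)
  | wandL C hp1 hp2 ih1 ih2 =>
    rename_i Δ₁ Δ₂ α β γ
    intro H hH
    obtain ⟨HΔ, G, rfl, hΔ, p3, p4⟩ := fill_decomp ξ C H _ hH.symm
    obtain ⟨H₁₂, Hw, rfl, e12, ew⟩ := fillH_eq_comma hΔ.symm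
    obtain ⟨H₁, H₂, rfl, e1, e2⟩ := fillH_eq_comma e12
    rcases fillH_eq_frml ew with ⟨rfl, hξ⟩ | rfl
    · rw [hξ] at hχ; simp at hχ
    · have ha := ih1 H₁ e1.symm
      have hb := ih2 (G (.comma H₂ (.frml β))) (by rw [p3]; simp [BunchH.fillH, e2])
      obtain ⟨Ce, hCe⟩ := p4 e
      rw [hCe] at hb ⊢
      simp only [BunchH.fillH] at hb ⊢
      exact Proves.wandL Ce ha hb
  | topR =>
    intro H hH
    rw [fillH_eq_aempty hH.symm]
    exact Proves.topR
  | topL C hp' ih =>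
    intro H hH
    obtain ⟨HΔ, G, rfl, hΔ, p3, p4⟩ := fill_decomp ξ C H _ hH.symm
    obtain ⟨Ce, hCe⟩ := p4 e
    rcases fillH_eq_frml hΔ.symm with ⟨rfl, hξ⟩ | rfl
    · have he := hχ
      rw [hξ] at he; simp at he
      have h1 := ih (G .aempty) (by rw [p3]; simp [BunchH.fillH])
      rw [hCe] at h1 ⊢
      simp only [BunchH.fillH] at h1 ⊢
      rw [he]
      exact h1
    · have h1 := ih (G .aempty) (by rw [p3]; simp [BunchH.fillH])
      rw [hCe] at h1 ⊢
      simp only [BunchH.fillH] at h1 ⊢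
      exact Proves.topL Ce h1
  | andR hp1 hp2 ih1 ih2 =>
    intro H hH
    obtain ⟨H₁, H₂, rfl, e1, e2⟩ := fillH_eq_semic hH.symm
    exact Proves.andR (ih1 H₁ e1.symm) (ih2 H₂ e2.symm)
  | andL C hp' ih =>
    rename_i α β γ
    intro H hH
    obtain ⟨HΔ, G, rfl, hΔ, p3, p4⟩ := fill_decomp ξ C H _ hH.symm
    obtain ⟨Ce, hCe⟩ := p4 e
    have h1 := ih (G (.semic (.frml α) (.frml β))) (by rw [p3]; simp [BunchH.fillH])
    rcases fillH_eq_frml hΔ.symm with ⟨rfl, hξ⟩ | rfl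
    · have he := hχ
      rw [hξ] at he; simp at he
      obtain ⟨α', β', ⟨rfl, rfl⟩, rfl⟩ := he
      rw [hCe] at h1 ⊢
      simp only [BunchH.fillH] at h1 ⊢
      exact h1
    · rw [hCe] at h1 ⊢
      simp only [BunchH.fillH] at h1 ⊢
      exact Proves.andL Ce h1
  | impR hp' ih =>
    rename_i Δ α β
    intro H hH
    have h1 := ih (.semic H (.frml α)) (by simp [BunchH.fillH, ← hH])
    exact Proves.impR (by simpa [BunchH.fillH] using h1)
  | impL C hp1 hp2 ih1 ih2 =>
    rename_i Δ₁ Δ₂ α β γ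
    intro H hH
    obtain ⟨HΔ, G, rfl, hΔ, p3, p4⟩ := fill_decomp ξ C H _ hH.symm
    obtain ⟨H₁₂, Hw, rfl, e12, ew⟩ := fillH_eq_semic hΔ.symm
    obtain ⟨H₁, H₂, rfl, e1, e2⟩ := fillH_eq_semic e12
    rcases fillH_eq_frml ew with ⟨rfl, hξ⟩ | rfl
    · rw [hξ] at hχ; simp at hχ
    · have ha := ih1 H₁ e1.symm
      have hb := ih2 (G (.semic H₂ (.frml β))) (by rw [p3]; simp [BunchH.fillH, e2])
      obtain ⟨Ce, hCe⟩ := p4 e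
      rw [hCe] at hb ⊢
      simp only [BunchH.fillH] at hb ⊢
      exact Proves.impL Ce ha hb
  | botL C =>
    intro H hH
    obtain ⟨HΔ, G, rfl, hΔ, p3, p4⟩ := fill_decomp ξ C H _ hH.symm
    obtain ⟨Ce, hCe⟩ := p4 e
    rcases fillH_eq_frml hΔ.symm with ⟨rfl, hξ⟩ | rfl
    · rw [hξ] at hχ; simp at hχ
    · rw [hCe]
      simp only [BunchH.fillH]
      exact Proves.botL Ce
  | orR1 hp' ih =>
    intro H hH
    exact Proves.orR1 (ih H hH)
  | orR2 hp' ih =>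
    intro H hH
    exact Proves.orR2 (ih H hH)
  | orL C hp1 hp2 ih1 ih2 =>
    rename_i α β γ
    intro H hH
    obtain ⟨HΔ, G, rfl, hΔ, p3, p4⟩ := fill_decomp ξ C H _ hH.symm
    obtain ⟨Ce, hCe⟩ := p4 e
    rcases fillH_eq_frml hΔ.symm with ⟨rfl, hξ⟩ | rfl
    · rw [hξ] at hχ; simp at hχ
    · have ha := ih1 (G (.frml α)) (by rw [p3]; simp [BunchH.fillH])
      have hb := ih2 (G (.frml β)) (by rw [p3]; simp [BunchH.fillH])
      rw [hCe] at ha hb ⊢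
      simp only [BunchH.fillH] at ha hb ⊢
      exact Proves.orL Ce ha hb


/-- Invertibility of the right wand rule. -/
theorem wand_r_inv {Γ : Bunch} {χ : Frml} (hp : Proves Γ χ) :
    ∀ φ ψ, χ = .wand φ ψ → Proves (.comma Γ (.frml φ)) ψ := by
  induction hp with
  | ax a => intro φ ψ h; simp at h
  | equiv hp' he ih =>
    intro φ ψ h
    exact Proves.equiv (ih φ ψ h) (BEquiv.ctx (.commaL .hole (.frml φ)) he)
  | weaken C hp' ih => intro φ ψ h; exact Proves.weaken (.commaL C (.frml φ)) (ih φ ψ h)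
  | contract C hp' ih => intro φ ψ h; exact Proves.contract (.commaL C (.frml φ)) (ih φ ψ h)
  | empR => intro φ ψ h; simp at h
  | empL C hp' ih => intro φ ψ h; exact Proves.empL (.commaL C (.frml φ)) (ih φ ψ h)
  | sepR hp1 hp2 ih1 ih2 => intro φ ψ h; simp at h
  | sepL C hp' ih => intro φ ψ h; exact Proves.sepL (.commaL C (.frml φ)) (ih φ ψ h)
  | wandR hp' ih =>
    intro φ ψ h
    injection h with h1 h2
    subst h1; subst h2
    exact hp'
  | wandL C hp1 hp2 ih1 ih2 =>
    intro φ ψ h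
    exact Proves.wandL (.commaL C (.frml φ)) hp1 (ih2 φ ψ h)
  | topR => intro φ ψ h; simp at h
  | topL C hp' ih => intro φ ψ h; exact Proves.topL (.commaL C (.frml φ)) (ih φ ψ h)
  | andR hp1 hp2 ih1 ih2 => intro φ ψ h; simp at h
  | andL C hp' ih => intro φ ψ h; exact Proves.andL (.commaL C (.frml φ)) (ih φ ψ h)
  | impR hp' ih => intro φ ψ h; simp at h
  | impL C hp1 hp2 ih1 ih2 =>
    intro φ ψ h
    exact Proves.impL (.commaL C (.frml φ)) hp1 (ih2 φ ψ h)
  | botL C => intro φ ψ h; exact Proves.botL (.commaL C (.frml φ))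
  | orR1 hp' ih => intro φ ψ h; simp at h
  | orR2 hp' ih => intro φ ψ h; simp at h
  | orL C hp1 hp2 ih1 ih2 =>
    intro φ ψ h
    exact Proves.orL (.commaL C (.frml φ)) (ih1 φ ψ h) (ih2 φ ψ h)

/-- Invertibility of the right implication rule. -/
theorem imp_r_inv {Γ : Bunch} {χ : Frml} (hp : Proves Γ χ) :
    ∀ φ ψ, χ = .imp φ ψ → Proves (.semic Γ (.frml φ)) ψ := by
  induction hp with
  | ax a => intro φ ψ h; simp at h
  | equiv hp' he ih =>
    intro φ ψ h
    exact Proves.equiv (ih φ ψ h) (BEquiv.ctx (.semicL .hole (.frml φ)) he)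
  | weaken C hp' ih => intro φ ψ h; exact Proves.weaken (.semicL C (.frml φ)) (ih φ ψ h)
  | contract C hp' ih => intro φ ψ h; exact Proves.contract (.semicL C (.frml φ)) (ih φ ψ h)
  | empR => intro φ ψ h; simp at h
  | empL C hp' ih => intro φ ψ h; exact Proves.empL (.semicL C (.frml φ)) (ih φ ψ h)
  | sepR hp1 hp2 ih1 ih2 => intro φ ψ h; simp at h
  | sepL C hp' ih => intro φ ψ h; exact Proves.sepL (.semicL C (.frml φ)) (ih φ ψ h)
  | wandR hp' ih => intro φ ψ h; simp at h
  | wandL C hp1 hp2 ih1 ih2 =>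
    intro φ ψ h
    exact Proves.wandL (.semicL C (.frml φ)) hp1 (ih2 φ ψ h)
  | topR => intro φ ψ h; simp at h
  | topL C hp' ih => intro φ ψ h; exact Proves.topL (.semicL C (.frml φ)) (ih φ ψ h)
  | andR hp1 hp2 ih1 ih2 => intro φ ψ h; simp at h
  | andL C hp' ih => intro φ ψ h; exact Proves.andL (.semicL C (.frml φ)) (ih φ ψ h)
  | impR hp' ih =>
    intro φ ψ h
    injection h with h1 h2
    subst h1; subst h2
    exact hp'
  | impL C hp1 hp2 ih1 ih2 =>
    intro φ ψ h
    exact Proves.impL (.semicL C (.frml φ)) hp1 (ih2 φ ψ h)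
  | botL C => intro φ ψ h; exact Proves.botL (.semicL C (.frml φ))
  | orR1 hp' ih => intro φ ψ h; simp at h
  | orR2 hp' ih => intro φ ψ h; simp at h
  | orL C hp1 hp2 ih1 ih2 =>
    intro φ ψ h
    exact Proves.orL (.semicL C (.frml φ)) (ih1 φ ψ h) (ih2 φ ψ h)

/-- A bunch may be replaced by its collapse formula on the left. -/
theorem collapse_l (Δ : Bunch) :
    ∀ (C : BCtx) (φ : Frml), Proves (C.fill Δ) φ → Proves (C.fill (.frml Δ.collapse)) φ := by
  induction Δ with
  | frml ψ => exact fun C φ h => h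
  | mempty => exact fun C φ h => Proves.empL C h
  | aempty => exact fun C φ h => Proves.topL C h
  | comma Δ₁ Δ₂ ih1 ih2 =>
    intro C φ h
    have h1 := ih1 (C.comp (.commaL .hole Δ₂)) φ (by rw [BCtx.fill_comp]; exact h)
    rw [BCtx.fill_comp] at h1
    have h2 := ih2 (C.comp (.commaR (.frml Δ₁.collapse) .hole)) φ
      (by rw [BCtx.fill_comp]; exact h1)
    rw [BCtx.fill_comp] at h2
    exact Proves.sepL C h2
  | semic Δ₁ Δ₂ ih1 ih2 =>
    intro C φ h
    have h1 := ih1 (C.comp (.semicL .hole Δ₂)) φ (by rw [BCtx.fill_comp]; exact h)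
    rw [BCtx.fill_comp] at h1
    have h2 := ih2 (C.comp (.semicR (.frml Δ₁.collapse) .hole)) φ
      (by rw [BCtx.fill_comp]; exact h1)
    rw [BCtx.fill_comp] at h2
    exact Proves.andL C h2

/-- The collapse formula may be replaced by the bunch itself on the left. -/
theorem collapse_l_inv (Δ : Bunch) :
    ∀ (C : BCtx) (φ : Frml), Proves (C.fill (.frml Δ.collapse)) φ → Proves (C.fill Δ) φ := by
  induction Δ with
  | frml ψ => exact fun C φ h => h
  | mempty =>
    intro C φ h
    have h1 := provesInv (Or.inl ⟨rfl, rfl⟩) h C.toHc (by rw [BCtx.fillH_toHc]; rfl)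
    rwa [BCtx.fillH_toHc] at h1
  | aempty =>
    intro C φ h
    have h1 := provesInv (Or.inr (Or.inl ⟨rfl, rfl⟩)) h C.toHc (by rw [BCtx.fillH_toHc]; rfl)
    rwa [BCtx.fillH_toHc] at h1
  | comma Δ₁ Δ₂ ih1 ih2 =>
    intro C φ h
    have h1 := provesInv (Or.inr (Or.inr (Or.inl ⟨Δ₁.collapse, Δ₂.collapse, rfl, rfl⟩)))
      h C.toHc (by rw [BCtx.fillH_toHc]; rfl)
    rw [BCtx.fillH_toHc] at h1
    have h2 := ih1 (C.comp (.commaL .hole (.frml Δ₂.collapse))) φ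
      (by rw [BCtx.fill_comp]; exact h1)
    rw [BCtx.fill_comp] at h2
    have h3 := ih2 (C.comp (.commaR Δ₁ .hole)) φ (by rw [BCtx.fill_comp]; exact h2)
    rwa [BCtx.fill_comp] at h3
  | semic Δ₁ Δ₂ ih1 ih2 =>
    intro C φ h
    have h1 := provesInv (Or.inr (Or.inr (Or.inr ⟨Δ₁.collapse, Δ₂.collapse, rfl, rfl⟩)))
      h C.toHc (by rw [BCtx.fillH_toHc]; rfl)
    rw [BCtx.fillH_toHc] at h1
    have h2 := ih1 (C.comp (.semicL .hole (.frml Δ₂.collapse))) φ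
      (by rw [BCtx.fill_comp]; exact h1)
    rw [BCtx.fill_comp] at h2
    have h3 := ih2 (C.comp (.semicR Δ₁ .hole)) φ (by rw [BCtx.fill_comp]; exact h2)
    rwa [BCtx.fill_comp] at h3

/-! ### Closure operator facts -/

theorem mem_clB {X : Set Bunch} {b : Bunch}
    (h : ∀ φ : Frml, X ⊆ pr φ → b ∈ pr φ) : b ∈ clB X := by
  intro Y hY
  obtain ⟨φ, rfl, hXY⟩ := hY
  exact h φ hXY

theorem clB_apply {X : Set Bunch} {b : Bunch} (hb : b ∈ clB X) {φ : Frml}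
    (h : X ⊆ pr φ) : b ∈ pr φ :=
  hb (pr φ) ⟨φ, rfl, h⟩

theorem subset_clB (X : Set Bunch) : X ⊆ clB X :=
  fun _ hb => mem_clB fun _ hXY => hXY hb

theorem clB_mono {X Y : Set Bunch} (h : X ⊆ Y) : clB X ⊆ clB Y :=
  fun _ hb => mem_clB fun _ hYp => clB_apply hb (h.trans hYp)

theorem clB_idem (X : Set Bunch) : clB (clB X) = clB X := by
  apply Set.Subset.antisymm
  · exact fun b hb => mem_clB fun φ hXp => clB_apply hb (fun _ hc => clB_apply hc hXp)
  · exact subset_clB _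

theorem clB_le_of_subset_clB {X Y : Set Bunch} (h : X ⊆ clB Y) : clB X ⊆ clB Y := by
  rw [← clB_idem Y]; exact clB_mono h

theorem frml_bot_mem_clB (X : Set Bunch) : Bunch.frml .bot ∈ clB X :=
  mem_clB fun φ _ => Proves.botL .hole

/-! ### The closure is a nucleus for both products -/

theorem clB_prod_comma (A B : Set Bunch) :
    clB {b | ∃ Δ ∈ clB A, ∃ Δ' ∈ clB B, b = Bunch.comma Δ Δ'} =
    clB {b | ∃ Δ ∈ A, ∃ Δ' ∈ B, b = Bunch.comma Δ Δ'} := by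
  apply Set.Subset.antisymm
  · apply clB_le_of_subset_clB
    rintro b ⟨Δ, hΔ, Δ', hΔ', rfl⟩
    apply mem_clB
    intro φ hsub
    show Proves (.comma Δ Δ') φ
    have step1 : ∀ a ∈ A, Proves (.comma a Δ') φ := by
      intro a ha
      have hB : ∀ b', b' ∈ B → Proves b' (.wand a.collapse φ) := by
        intro b' hb'
        have h0 : Proves (.comma a b') φ := hsub ⟨a, ha, b', hb', rfl⟩
        have h1 : Proves (.comma (.frml a.collapse) b') φ :=
          collapse_l a (.commaL .hole b') φ h0
        have h2 : Proves (.comma b' (.frml a.collapse)) φ :=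
          Proves.equiv h1 (BEquiv.commaComm _ _)
        exact Proves.wandR h2
      have h3 : Proves Δ' (.wand a.collapse φ) := clB_apply hΔ' hB
      have h4 := wand_r_inv h3 a.collapse φ rfl
      have h5 := collapse_l_inv a (.commaR Δ' .hole) φ h4
      exact Proves.equiv h5 (BEquiv.commaComm _ _)
    have hA : ∀ a, a ∈ A → Proves a (.wand Δ'.collapse φ) := by
      intro a ha
      have h1 := collapse_l Δ' (.commaR a .hole) φ (step1 a ha)
      exact Proves.wandR h1
    have h3 : Proves Δ (.wand Δ'.collapse φ) := clB_apply hΔ hA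
    have h4 := wand_r_inv h3 Δ'.collapse φ rfl
    exact collapse_l_inv Δ' (.commaR Δ .hole) φ h4
  · apply clB_mono
    rintro b ⟨Δ, hΔ, Δ', hΔ', rfl⟩
    exact ⟨Δ, subset_clB _ hΔ, Δ', subset_clB _ hΔ', rfl⟩

theorem clB_prod_semic (A B : Set Bunch) :
    clB {b | ∃ Δ ∈ clB A, ∃ Δ' ∈ clB B, b = Bunch.semic Δ Δ'} =
    clB {b | ∃ Δ ∈ A, ∃ Δ' ∈ B, b = Bunch.semic Δ Δ'} := by
  apply Set.Subset.antisymm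
  · apply clB_le_of_subset_clB
    rintro b ⟨Δ, hΔ, Δ', hΔ', rfl⟩
    apply mem_clB
    intro φ hsub
    show Proves (.semic Δ Δ') φ
    have step1 : ∀ a ∈ A, Proves (.semic a Δ') φ := by
      intro a ha
      have hB : ∀ b', b' ∈ B → Proves b' (.imp a.collapse φ) := by
        intro b' hb'
        have h0 : Proves (.semic a b') φ := hsub ⟨a, ha, b', hb', rfl⟩
        have h1 : Proves (.semic (.frml a.collapse) b') φ :=
          collapse_l a (.semicL .hole b') φ h0
        have h2 : Proves (.semic b' (.frml a.collapse)) φ :=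
          Proves.equiv h1 (BEquiv.semicComm _ _)
        exact Proves.impR h2
      have h3 : Proves Δ' (.imp a.collapse φ) := clB_apply hΔ' hB
      have h4 := imp_r_inv h3 a.collapse φ rfl
      have h5 := collapse_l_inv a (.semicR Δ' .hole) φ h4
      exact Proves.equiv h5 (BEquiv.semicComm _ _)
    have hA : ∀ a, a ∈ A → Proves a (.imp Δ'.collapse φ) := by
      intro a ha
      have h1 := collapse_l Δ' (.semicR a .hole) φ (step1 a ha)
      exact Proves.impR h1
    have h3 : Proves Δ (.imp Δ'.collapse φ) := clB_apply hΔ hA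
    have h4 := imp_r_inv h3 Δ'.collapse φ rfl
    exact collapse_l_inv Δ' (.semicR Δ .hole) φ h4
  · apply clB_mono
    rintro b ⟨Δ, hΔ, Δ', hΔ', rfl⟩
    exact ⟨Δ, subset_clB _ hΔ, Δ', subset_clB _ hΔ', rfl⟩


/-! ### Bunched terms -/

theorem BTerm.subst_congr (t : BTerm) {Δ Δ' : Nat → Bunch}
    (h : ∀ i, 1 ≤ t.occ i → Δ i = Δ' i) : t.subst Δ = t.subst Δ' := by
  induction t with
  | var j => exact h j (by simp [BTerm.occ])
  | comma t u iht ihu =>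
    show Bunch.comma _ _ = Bunch.comma _ _
    rw [iht fun i hi => h i (by simp [BTerm.occ]; omega),
      ihu fun i hi => h i (by simp [BTerm.occ]; omega)]
  | semic t u iht ihu =>
    show Bunch.semic _ _ = Bunch.semic _ _
    rw [iht fun i hi => h i (by simp [BTerm.occ]; omega),
      ihu fun i hi => h i (by simp [BTerm.occ]; omega)]

theorem interp_eq (X : Nat → Set Bunch) (hX : ∀ i, ClosedB (X i)) :
    ∀ (T : BTerm), T.Linear →
    T.interpC X = clB {b | ∃ Δ : Nat → Bunch, (∀ i, Δ i ∈ X i) ∧ b = T.subst Δ} := by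
  intro T
  induction T with
  | var i =>
    intro _
    have hS : {b | ∃ Δ : Nat → Bunch, (∀ j, Δ j ∈ X j) ∧ b = BTerm.subst (.var i) Δ}
        = X i := by
      ext b
      constructor
      · rintro ⟨Δ, hΔ, rfl⟩; exact hΔ i
      · intro hb
        refine ⟨fun j => if j = i then b else .frml .bot, fun j => ?_, by simp [BTerm.subst]⟩
        by_cases h : j = i
        · subst h; simpa using hb
        · simp only [h, if_false]
          rw [← hX j]
          exact frml_bot_mem_clB _
    show X i = _
    rw [hS, hX i]
  | comma t u iht ihu =>
    intro hT
    have ht : t.Linear := fun i => le_trans (Nat.le_add_right _ _) (hT i)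
    have hu : u.Linear := fun i => le_trans (Nat.le_add_left _ _) (hT i)
    show clB {b | ∃ Δ ∈ t.interpC X, ∃ Δ' ∈ u.interpC X, b = Bunch.comma Δ Δ'} = _
    rw [iht ht, ihu hu, clB_prod_comma]
    refine congrArg clB ?_
    ext b
    constructor
    · rintro ⟨a, ⟨Δ₁, hΔ₁, rfl⟩, c, ⟨Δ₂, hΔ₂, rfl⟩, rfl⟩
      refine ⟨fun i => if 1 ≤ t.occ i then Δ₁ i else Δ₂ i, fun i => ?_, ?_⟩
      · by_cases h : 1 ≤ t.occ i
        · simp only [h, if_true]; exact hΔ₁ i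
        · simp only [h, if_false]; exact hΔ₂ i
      · show Bunch.comma _ _ = Bunch.comma (t.subst _) (u.subst _)
        rw [BTerm.subst_congr t (Δ' := fun i => if 1 ≤ t.occ i then Δ₁ i else Δ₂ i)
            (fun i hi => by simp [hi]),
          BTerm.subst_congr u (Δ' := fun i => if 1 ≤ t.occ i then Δ₁ i else Δ₂ i)
            (fun i hi => by
              have := hT i
              simp only [BTerm.occ] at this
              have h0 : ¬ (1 ≤ t.occ i) := by omega
              simp [h0])]
    · rintro ⟨Δ, hΔ, rfl⟩
      exact ⟨t.subst Δ, ⟨Δ, hΔ, rfl⟩, u.subst Δ, ⟨Δ, hΔ, rfl⟩, rfl⟩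
  | semic t u iht ihu =>
    intro hT
    have ht : t.Linear := fun i => le_trans (Nat.le_add_right _ _) (hT i)
    have hu : u.Linear := fun i => le_trans (Nat.le_add_left _ _) (hT i)
    show clB {b | ∃ Δ ∈ t.interpC X, ∃ Δ' ∈ u.interpC X, b = Bunch.semic Δ Δ'} = _
    rw [iht ht, ihu hu, clB_prod_semic]
    refine congrArg clB ?_
    ext b
    constructor
    · rintro ⟨a, ⟨Δ₁, hΔ₁, rfl⟩, c, ⟨Δ₂, hΔ₂, rfl⟩, rfl⟩
      refine ⟨fun i => if 1 ≤ t.occ i then Δ₁ i else Δ₂ i, fun i => ?_, ?_⟩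
      · by_cases h : 1 ≤ t.occ i
        · simp only [h, if_true]; exact hΔ₁ i
        · simp only [h, if_false]; exact hΔ₂ i
      · show Bunch.semic _ _ = Bunch.semic (t.subst _) (u.subst _)
        rw [BTerm.subst_congr t (Δ' := fun i => if 1 ≤ t.occ i then Δ₁ i else Δ₂ i)
            (fun i hi => by simp [hi]),
          BTerm.subst_congr u (Δ' := fun i => if 1 ≤ t.occ i then Δ₁ i else Δ₂ i)
            (fun i hi => by
              have := hT i
              simp only [BTerm.occ] at this
              have h0 : ¬ (1 ≤ t.occ i) := by omega
              simp [h0])]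
    · rintro ⟨Δ, hΔ, rfl⟩
      exact ⟨t.subst Δ, ⟨Δ, hΔ, rfl⟩, u.subst Δ, ⟨Δ, hΔ, rfl⟩, rfl⟩

/-- for a linear bunched term `T` and closed sets `Xᵢ`,
`[[T]](X⃗) = cl {T[Δ⃗] | Δᵢ ∈ Xᵢ}`. -/
theorem linear_bterm_interp (T : BTerm) (hT : T.Linear)
    (X : Nat → Set Bunch) (hX : ∀ i, ClosedB (X i)) :
    T.interpC X = clB {b | ∃ Δ : Nat → Bunch, (∀ i, Δ i ∈ X i) ∧ b = T.subst Δ} :=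
  interp_eq X hX T hT
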